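/- Let n ≥ 1, let X, Y ∈ Mat_n(ℂ), let i ∈ ℂⁿ, and let j : ℂⁿ → ℂ be a ℂ-linear functional. Suppose that X·Y − Y·X + i·jᵀ = 0, where i·jᵀ denotes the rank-one matrix acting by v ↦ (j v)·i. Suppose moreover the stability condition: the only linear subspace W ⊆ ℂⁿ that contains i and is invariant under both X and Y is W = ℂⁿ. Then j = 0, and consequently X·Y = Y·X. -/
import Mathlib

namespace ADHMaux

open Matrix

variable {n : ℕ} (X Y : Matrix (Fin n) (Fin n) ℂ) (i : Fin n → ℂ)
  (j : (Fin n → ℂ) →ₗ[ℂ] ℂ)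

/-- The rank-one matrix `i · jᵀ`. -/
noncomputable def Jmat : Matrix (Fin n) (Fin n) ℂ :=
  Matrix.of fun k l => i k * j (Pi.single l 1)

/-- Word in `X` (true) and `Y` (false), as a matrix product. -/
noncomputable def Wmat : List Bool → Matrix (Fin n) (Fin n) ℂ
  | [] => 1
  | (b :: w) => (if b then X else Y) * Wmat w

lemma jsum (v : Fin n → ℂ) : j v = ∑ k, v k * j (Pi.single k 1) := by
  conv_lhs => rw [← Finset.univ_sum_single v]
  rw [map_sum]
  refine Finset.sum_congr rfl fun k _ => ?_
  have : Pi.single k (v k) = v k • (Pi.single k 1 : Fin n → ℂ) := by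
    ext l
    by_cases h : l = k <;> simp [Pi.single_apply, h]
  rw [this, LinearMap.map_smul, smul_eq_mul]

lemma Jmat_mulVec (v : Fin n → ℂ) : Jmat i j *ᵥ v = j v • i := by
  ext k
  rw [jsum j v]
  simp only [Jmat, Matrix.mulVec, dotProduct, Matrix.of_apply, Pi.smul_apply,
    smul_eq_mul, Finset.sum_mul]
  exact Finset.sum_congr rfl fun x _ => by ring

lemma j_mulVec_eq_trace (M : Matrix (Fin n) (Fin n) ℂ) :
    j (M *ᵥ i) = Matrix.trace (M * Jmat i j) := by
  rw [jsum j (M *ᵥ i)]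
  simp only [Matrix.trace, Matrix.diag, Matrix.mul_apply, Jmat, Matrix.of_apply,
    Matrix.mulVec, dotProduct]
  refine Finset.sum_congr rfl fun k _ => ?_
  rw [Finset.sum_mul]
  exact Finset.sum_congr rfl fun l _ => by ring

lemma Wmat_append (u v : List Bool) :
    Wmat X Y (u ++ v) = Wmat X Y u * Wmat X Y v := by
  induction u with
  | nil => simp [Wmat]
  | cons b u ih => simp [Wmat, ih, mul_assoc]

lemma Wmat_replicate_false (b : ℕ) :
    Wmat X Y (List.replicate b false) = Y ^ b := by
  induction b with
  | zero => simp [Wmat]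
  | succ b ih => rw [List.replicate_succ]; simp only [Wmat, ih, if_true, if_false, Bool.false_eq_true]; rw [← pow_succ']

lemma Wmat_replicate_true (a : ℕ) :
    Wmat X Y (List.replicate a true) = X ^ a := by
  induction a with
  | zero => simp [Wmat]
  | succ a ih => rw [List.replicate_succ]; simp only [Wmat, ih, if_true, if_false, Bool.false_eq_true]; rw [← pow_succ']

lemma comm_pow (hC : X * Y = Y * X - Jmat i j) (c : ℕ) :
    X * Y ^ c = Y ^ c * X - ∑ s ∈ Finset.range c, Y ^ s * Jmat i j * Y ^ (c - 1 - s) := by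
  induction c with
  | zero => simp
  | succ c ih =>
    have hS : (∑ s ∈ Finset.range c, Y ^ s * Jmat i j * Y ^ (c - 1 - s)) * Y
        = ∑ s ∈ Finset.range c, Y ^ s * Jmat i j * Y ^ (c - s) := by
      rw [Finset.sum_mul]
      refine Finset.sum_congr rfl fun s hs => ?_
      rw [Finset.mem_range] at hs
      rw [mul_assoc, ← pow_succ]
      congr 2
      omega
    have hS' : ∑ s ∈ Finset.range (c + 1), Y ^ s * Jmat i j * Y ^ (c + 1 - 1 - s)
        = (∑ s ∈ Finset.range c, Y ^ s * Jmat i j * Y ^ (c - s)) + Y ^ c * Jmat i j := by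
      rw [Finset.sum_range_succ]
      rw [Finset.sum_congr rfl fun s (hs : s ∈ Finset.range c) => by
        rw [show c + 1 - 1 - s = c - s from by omega]]
      rw [show c + 1 - 1 - c = 0 from by omega, pow_zero, mul_one]
    calc X * Y ^ (c + 1) = (X * Y ^ c) * Y := by rw [pow_succ, ← mul_assoc]
      _ = (Y ^ c * X) * Y - (∑ s ∈ Finset.range c, Y ^ s * Jmat i j * Y ^ (c - 1 - s)) * Y := by
          rw [ih, sub_mul]
      _ = Y ^ (c + 1) * X - Y ^ c * Jmat i j
            - ∑ s ∈ Finset.range c, Y ^ s * Jmat i j * Y ^ (c - s) := by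
          rw [mul_assoc, hC, mul_sub, hS, ← mul_assoc, ← pow_succ]
      _ = Y ^ (c + 1) * X - ∑ s ∈ Finset.range (c + 1), Y ^ s * Jmat i j * Y ^ (c + 1 - 1 - s) := by
          rw [hS']
          abel

lemma key (hC : X * Y = Y * X - Jmat i j) :
    ∀ w : List Bool, j (Wmat X Y w *ᵥ i) = 0 := by
  suffices h : ∀ (L : ℕ) (w : List Bool), w.length = L → j (Wmat X Y w *ᵥ i) = 0 by
    intro w; exact h w.length w rfl
  intro L
  induction L using Nat.strong_induction_on with
  | _ L IH =>
  intro w hw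
  have IH' : ∀ u : List Bool, u.length < L → j (Wmat X Y u *ᵥ i) = 0 :=
    fun u hu => IH u.length hu u rfl
  -- permutation invariance for words of length ≤ L
  have hperm : ∀ w1 w2 : List Bool, w1.Perm w2 → w1.length ≤ L →
      Wmat X Y w1 *ᵥ i = Wmat X Y w2 *ᵥ i := by
    intro w1 w2 hp
    induction hp with
    | nil => intro _; rfl
    | cons x p ih =>
      intro h
      simp only [Wmat, ← Matrix.mulVec_mulVec]
      rw [ih (by simpa using Nat.le_of_succ_le h)]
    | swap x y l =>
      intro h
      have hl : l.length < L := by simp at h; omega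
      have hswap : ∀ (A B : Matrix (Fin n) (Fin n) ℂ), A * B = B * A - Jmat i j →
          (B * (A * Wmat X Y l)) *ᵥ i = (A * (B * Wmat X Y l)) *ᵥ i := by
        intro A B hAB
        rw [← mul_assoc, ← mul_assoc, hAB, sub_mul]
        rw [Matrix.sub_mulVec, mul_assoc, ← Matrix.mulVec_mulVec (M := Jmat i j),
          Jmat_mulVec, IH' l hl]
        simp
      match x, y with
      | true, true => rfl
      | false, false => rfl
      | true, false =>
        simp only [Wmat, if_true, if_false]
        exact hswap X Y hC
      | false, true =>
        simp only [Wmat, if_true, if_false]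
        exact (hswap X Y hC).symm
    | trans p q ih1 ih2 =>
      intro h
      rw [ih1 h, ih2 (by rw [← p.length_eq]; exact h)]
  set a := w.count true with ha
  set b := w.count false with hb
  have hab : a + b = L := by
    rw [← hw, ha, hb]
    clear_value a b
    clear ha hb hw hperm IH IH'
    induction w with
    | nil => simp
    | cons c w ihw => cases c <;> simp [List.count_cons] <;> omega
  have hcount : ∀ (u : List Bool), u.count true = a → u.count false = b →
      u.Perm (List.replicate b false ++ List.replicate a true) := by
    intro u h1 h2
    rw [List.perm_iff_count]
    intro x
    cases x <;> simp [List.count_replicate, h1, h2]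
  have hsorted : Wmat X Y (List.replicate b false ++ List.replicate a true)
      = Y ^ b * X ^ a := by
    rw [Wmat_append, Wmat_replicate_false, Wmat_replicate_true]
  have hwperm : Wmat X Y w *ᵥ i = (Y ^ b * X ^ a) *ᵥ i := by
    rw [hperm w _ (hcount w rfl rfl) (le_of_eq hw), hsorted]
  set T := j ((Y ^ b * X ^ a) *ᵥ i) with hT
  -- trace computation
  have hJ : Jmat i j = Y * X - X * Y := by rw [hC]; abel
  have htr : T = Matrix.trace (Y ^ b * X ^ a * (Y * X))
      - Matrix.trace (Y ^ b * X ^ a * (X * Y)) := by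
    rw [hT, j_mulVec_eq_trace, hJ, mul_sub, Matrix.trace_sub]
  have h1 : Matrix.trace (Y ^ b * X ^ a * (Y * X))
      = Matrix.trace ((X * Y ^ b) * (X ^ a * Y)) := by
    rw [show Y ^ b * X ^ a * (Y * X) = (Y ^ b * X ^ a * Y) * X from by
      simp only [mul_assoc], Matrix.trace_mul_comm]
    congr 1
    simp only [mul_assoc]
  have h2 : Matrix.trace ((X * Y ^ b) * (X ^ a * Y))
      = Matrix.trace (Y ^ b * X ^ a * (X * Y))
        - ∑ s ∈ Finset.range b,
            Matrix.trace (Y ^ s * Jmat i j * Y ^ (b - 1 - s) * (X ^ a * Y)) := by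
    rw [comm_pow X Y i j hC b, sub_mul, Matrix.trace_sub, Finset.sum_mul,
      Matrix.trace_sum]
    congr 2
    rw [show Y ^ b * X * (X ^ a * Y) = Y ^ b * (X * X ^ a * Y) from by
        simp only [mul_assoc],
      show Y ^ b * X ^ a * (X * Y) = Y ^ b * (X ^ a * X * Y) from by
        simp only [mul_assoc]]
    rw [← pow_succ', ← pow_succ]
  have h3 : ∀ s ∈ Finset.range b,
      Matrix.trace (Y ^ s * Jmat i j * Y ^ (b - 1 - s) * (X ^ a * Y)) = T := by
    intro s hs
    rw [Finset.mem_range] at hs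
    have hword : Wmat X Y (List.replicate (b - 1 - s) false ++
        (List.replicate a true ++ List.replicate (s + 1) false))
        = Y ^ (b - 1 - s) * X ^ a * Y ^ (s + 1) := by
      rw [Wmat_append, Wmat_append, Wmat_replicate_false, Wmat_replicate_true,
        Wmat_replicate_false, mul_assoc]
    have hlen : (List.replicate (b - 1 - s) false ++
        (List.replicate a true ++ List.replicate (s + 1) false)).length ≤ L := by
      simp only [List.length_append, List.length_replicate]
      omega
    calc Matrix.trace (Y ^ s * Jmat i j * Y ^ (b - 1 - s) * (X ^ a * Y))
        = Matrix.trace (Y ^ s * (Jmat i j * Y ^ (b - 1 - s) * (X ^ a * Y))) := by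
          simp only [mul_assoc]
      _ = Matrix.trace ((Jmat i j * Y ^ (b - 1 - s) * (X ^ a * Y)) * Y ^ s) :=
          Matrix.trace_mul_comm _ _
      _ = Matrix.trace (Jmat i j * (Y ^ (b - 1 - s) * X ^ a * Y ^ (s + 1))) := by
          rw [show (Jmat i j * Y ^ (b - 1 - s) * (X ^ a * Y)) * Y ^ s
              = Jmat i j * (Y ^ (b - 1 - s) * X ^ a * Y ^ (s + 1)) from by
            simp only [mul_assoc, ← pow_succ']]
      _ = Matrix.trace ((Y ^ (b - 1 - s) * X ^ a * Y ^ (s + 1)) * Jmat i j) :=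
          Matrix.trace_mul_comm _ _
      _ = j ((Y ^ (b - 1 - s) * X ^ a * Y ^ (s + 1)) *ᵥ i) :=
          (j_mulVec_eq_trace i j _).symm
      _ = j (Wmat X Y (List.replicate (b - 1 - s) false ++
            (List.replicate a true ++ List.replicate (s + 1) false)) *ᵥ i) := by
          rw [hword]
      _ = j (Wmat X Y (List.replicate b false ++ List.replicate a true) *ᵥ i) := by
          rw [hperm _ _ (hcount _ (by simp [List.count_replicate])
            (by simp [List.count_replicate]; omega)) hlen]
      _ = T := by rw [hsorted]
  have hbT : T = -(b : ℂ) * T := by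
    conv_lhs => rw [htr, h1, h2]
    rw [Finset.sum_congr rfl h3, Finset.sum_const, Finset.card_range, nsmul_eq_mul]
    ring
  have hT0 : T = 0 := by
    have h4 : (1 + (b : ℂ)) * T = 0 := by linear_combination hbT
    have h5 : (1 + (b : ℂ)) ≠ 0 := by
      rw [add_comm]
      exact Nat.cast_add_one_ne_zero b
    exact (mul_eq_zero.mp h4).resolve_left h5
  rw [hwperm]
  exact hT0

end ADHMaux

open Matrix

/-- ADHM stability forces `j = 0`: if `X·Y − Y·X + i·jᵀ = 0` (where `i·jᵀ` is the rank-one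
operator `v ↦ (j v) • i`) and the only subspace of `ℂⁿ` containing `i` and invariant under
both `X` and `Y` is all of `ℂⁿ`, then `j = 0` and `X` and `Y` commute. -/
theorem adhm_stability_forces_j_zero (n : ℕ) (hn : 1 ≤ n)
    (X Y : Matrix (Fin n) (Fin n) ℂ) (i : Fin n → ℂ)
    (j : (Fin n → ℂ) →ₗ[ℂ] ℂ)
    (hmu : ∀ v : Fin n → ℂ, (X * Y - Y * X).mulVec v + j v • i = 0)
    (hstab : ∀ W : Submodule ℂ (Fin n → ℂ), i ∈ W →
      (∀ w ∈ W, X.mulVec w ∈ W) → (∀ w ∈ W, Y.mulVec w ∈ W) → W = ⊤) :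
    j = 0 ∧ X * Y = Y * X := by
  have hM : ∀ v, (X * Y - Y * X + ADHMaux.Jmat i j) *ᵥ v = 0 := by
    intro v
    rw [Matrix.add_mulVec, ADHMaux.Jmat_mulVec]
    exact hmu v
  have h0 : X * Y - Y * X + ADHMaux.Jmat i j = 0 := by
    ext k l
    have := congrFun (hM (Pi.single l 1)) k
    simpa using this
  have hC : X * Y = Y * X - ADHMaux.Jmat i j := by
    rw [eq_sub_iff_add_eq, ← sub_eq_zero,
      show X * Y + ADHMaux.Jmat i j - Y * X = X * Y - Y * X + ADHMaux.Jmat i j from by abel]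
    exact h0
  have hkey := ADHMaux.key X Y i j hC
  -- the span of all words applied to i
  set W : Submodule ℂ (Fin n → ℂ) :=
    Submodule.span ℂ (Set.range fun w : List Bool => ADHMaux.Wmat X Y w *ᵥ i) with hW
  have hiW : i ∈ W := by
    apply Submodule.subset_span
    exact ⟨[], by simp [ADHMaux.Wmat]⟩
  have hinv : ∀ (A : Matrix (Fin n) (Fin n) ℂ) (bb : Bool), (if bb then X else Y) = A →
      ∀ v ∈ W, A.mulVec v ∈ W := by
    rintro A bb rfl v hv
    induction hv using Submodule.span_induction with
    | mem x hx =>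
      obtain ⟨u, rfl⟩ := hx
      apply Submodule.subset_span
      exact ⟨bb :: u, by simp [ADHMaux.Wmat, Matrix.mulVec_mulVec]⟩
    | zero => simp [Matrix.mulVec_zero]
    | add x y _ _ hx hy =>
      rw [Matrix.mulVec_add]
      exact Submodule.add_mem W hx hy
    | smul c x _ hx =>
      rw [Matrix.mulVec_smul]
      exact Submodule.smul_mem W c hx
  have hWtop : W = ⊤ :=
    hstab W hiW (hinv X true rfl) (hinv Y false rfl)
  have hj : j = 0 := by
    apply LinearMap.ext
    intro v
    have hv : v ∈ W := hWtop ▸ Submodule.mem_top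
    simp only [LinearMap.zero_apply]
    induction hv using Submodule.span_induction with
    | mem x hx =>
      obtain ⟨u, rfl⟩ := hx
      exact hkey u
    | zero => simp
    | add x y _ _ hx hy => simp [map_add, hx, hy]
    | smul c x _ hx => rw [LinearMap.map_smul, hx, smul_zero]
  refine ⟨hj, ?_⟩
  have hJ0 : ADHMaux.Jmat i j = 0 := by
    ext k l
    simp [ADHMaux.Jmat, hj]
  rw [hC, hJ0, sub_zero]
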